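/- Let C_0 be an [n,t] linear code over F_q with generator matrix G_0, and let C be an [n,k] subcode of C_0 with generator matrix G, where k ≤ t. Then C is a maximally recoverable subcode of C_0 (i.e., for every S ⊆ [n] with |S| = k and rank(G_0 restricted to columns S) = k we have rank(G restricted to S) = k) if and only if for every set S ⊆ [n] with |S| ≤ k, rank(G_0 restricted to S) = rank(G restricted to S). -/

import Mathlib

open Matrix

section Defs
variable {F : Type*} [Field F]

/-- Rank of the submatrix of `G` consisting of the columns indexed by `S`. -/
noncomputable def colRank {m α : Type*} [Fintype α] (G : Matrix m α F) (S : Finset α) : ℕ :=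
  (G.submatrix id (fun j : S => (j : α))).rank

/-- The row space of a matrix. -/
def rowSpan {m α : Type*} (G : Matrix m α F) : Submodule F (α → F) :=
  Submodule.span F (Set.range fun i => G i)

/-- Rank of the restriction (puncturing) of a code `C` to the coordinates in `S`. -/
noncomputable def restrRank {α : Type*} (C : Submodule F (α → F)) (S : Finset α) : ℕ :=
  Module.finrank F (C.map (LinearMap.funLeft F F (fun j : S => (j : α))))

/-- Shortening of a code on coordinates `α ⊕ β` to the coordinates `α`. -/
noncomputable def shortenSum {α β : Type*} (D : Submodule F ((α ⊕ β) → F)) :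
    Submodule F (α → F) :=
  Submodule.map (LinearMap.funLeft F F Sum.inl)
    (D ⊓ (⨅ j : β, LinearMap.ker
      (LinearMap.proj (R := F) (Sum.inr j) : ((α ⊕ β) → F) →ₗ[F] F)))

/-- A valid (zero-error, worst case) scheme for the point-to-point function-update problem. -/
def IsValidScheme [DecidableEq F] {n m ℓ : ℕ} (A : Matrix (Fin m) (Fin n) F)
    (H : Matrix (Fin ℓ) (Fin n) F) (ε : ℕ)
    (D : (Fin ℓ → F) → (Fin m → F) → (Fin m → F)) : Prop :=
  ∀ X E : Fin n → F, hammingNorm E ≤ ε →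
    D (H.mulVec (X + E)) (A.mulVec X) = A.mulVec (X + E)

end Defs

set_option linter.unusedSectionVars false
section Aux
variable {F : Type*} [Field F]

lemma range_col_eq_image {m n : ℕ} (G : Matrix (Fin m) (Fin n) F) (S : Finset (Fin n)) :
    Set.range (fun j : S => Gᵀ (j : Fin n)) = Gᵀ '' ↑S := by
  ext v
  constructor
  · rintro ⟨j, rfl⟩; exact ⟨j, j.2, rfl⟩
  · rintro ⟨a, ha, rfl⟩; exact ⟨⟨a, ha⟩, rfl⟩

lemma colRank_eq_finrank_span {m n : ℕ} (G : Matrix (Fin m) (Fin n) F) (S : Finset (Fin n)) :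
    colRank G S = Module.finrank F (Submodule.span F (Gᵀ '' ↑S)) := by
  rw [colRank, Matrix.rank_eq_finrank_span_cols]
  have hr : Set.range (G.submatrix id fun j : S => (j : Fin n)).col = Gᵀ '' ↑S := by
    ext v
    constructor
    · rintro ⟨j, rfl⟩; exact ⟨j, j.2, rfl⟩
    · rintro ⟨a, ha, rfl⟩; exact ⟨⟨a, ha⟩, rfl⟩
  rw [hr]

lemma li_iff_colRank_eq_card {m n : ℕ} (G : Matrix (Fin m) (Fin n) F) (S : Finset (Fin n)) :
    LinearIndependent F (fun j : S => Gᵀ (j : Fin n)) ↔ colRank G S = S.card := by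
  rw [linearIndependent_iff_card_eq_finrank_span, colRank_eq_finrank_span,
    range_col_eq_image, Set.finrank, Fintype.card_coe]
  exact eq_comm

lemma colRank_mono {m n : ℕ} (G : Matrix (Fin m) (Fin n) F) {S T : Finset (Fin n)} (h : S ⊆ T) :
    colRank G S ≤ colRank G T := by
  rw [colRank_eq_finrank_span, colRank_eq_finrank_span]
  exact Submodule.finrank_mono (Submodule.span_mono (Set.image_mono h))

lemma colRank_le_card {m n : ℕ} (G : Matrix (Fin m) (Fin n) F) (S : Finset (Fin n)) :
    colRank G S ≤ S.card :=
  (Matrix.rank_le_card_width _).trans (le_of_eq (Fintype.card_coe S))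

lemma li_subfamily {n : ℕ} {V : Type*} [AddCommGroup V] [Module F V] {f : Fin n → V}
    {S T : Finset (Fin n)} (h : S ⊆ T)
    (hT : LinearIndependent F (fun j : T => f (j : Fin n))) :
    LinearIndependent F (fun j : S => f (j : Fin n)) :=
  hT.comp (fun j : S => (⟨j, h j.2⟩ : T))
    (by intro a b hab; rwa [Subtype.mk.injEq, ← Subtype.ext_iff] at hab)

lemma li_of_bijOn {n : ℕ} {V : Type*} [AddCommGroup V] [Module F V] {f : Fin n → V}
    {T : Finset (Fin n)} {b : Set V} (h : Set.BijOn f ↑T b)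
    (hb : LinearIndependent F ((↑) : b → V)) :
    LinearIndependent F (fun j : T => f (j : Fin n)) := by
  have he : ∀ j : T, f (j : Fin n) ∈ b := fun j => h.mapsTo (Finset.mem_coe.mpr j.2)
  exact hb.comp (fun j : T => (⟨f (j : Fin n), he j⟩ : b))
    (by
      intro a b' hab
      rw [Subtype.mk.injEq] at hab
      exact Subtype.ext (h.injOn (Finset.mem_coe.mpr a.2) (Finset.mem_coe.mpr b'.2) hab))

lemma exists_finset_bijOn {α V : Type*} {f : α → V} {S : Finset α} {b : Set V}
    (hb : b ⊆ f '' ↑S) : ∃ T : Finset α, T ⊆ S ∧ Set.BijOn f ↑T b := by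
  obtain ⟨s', hs'S, hbij⟩ := Set.SurjOn.exists_bijOn_subset hb
  have hfin : s'.Finite := S.finite_toSet.subset hs'S
  refine ⟨hfin.toFinset, ?_, ?_⟩
  · rw [← Finset.coe_subset, hfin.coe_toFinset]; exact hs'S
  · rw [hfin.coe_toFinset]; exact hbij

lemma colRank_le_of_rows_mem {n t k : ℕ} (G0 : Matrix (Fin t) (Fin n) F)
    (G : Matrix (Fin k) (Fin n) F) (hsub : ∀ i, G i ∈ rowSpan G0) (S : Finset (Fin n)) :
    colRank G S ≤ colRank G0 S := by
  have h : ∀ i, ∃ c : Fin t → F, ∑ l, c l • G0 l = G i := fun i =>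
    (Submodule.mem_span_range_iff_exists_fun F).mp (hsub i)
  choose c hc using h
  have key : G.submatrix id (fun j : S => (j : Fin n)) =
      (Matrix.of c) * G0.submatrix id (fun j : S => (j : Fin n)) := by
    ext i j
    have := congrFun (hc i) ((j : Fin n))
    simp only [Finset.sum_apply, Pi.smul_apply, smul_eq_mul] at this
    simpa [Matrix.mul_apply] using this.symm
  rw [colRank, colRank, key]
  exact Matrix.rank_mul_le_right _ _

end Aux

lemma card_of_bijOn {α V : Type*} {f : α → V} {T : Finset α} {b : Set V}
    (h : Set.BijOn f ↑T b) : T.card = b.ncard := by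
  rw [← h.image_eq, Set.ncard_image_of_injOn h.injOn, Set.ncard_coe_finset]

/-- `C` (generated by `G`, an `[n,k]` subcode of the `[n,t]` code generated
by `G0`) is an MRSC of `C₀` iff the column ranks of `G0` and `G` agree on all column
sets of size at most `k`. -/
theorem mrsc_iff_rank_eq {F : Type*} [Field F] [Fintype F] {n t k : ℕ} (hkt : k ≤ t)
    (G0 : Matrix (Fin t) (Fin n) F) (G : Matrix (Fin k) (Fin n) F)
    (hG0 : G0.rank = t) (hG : G.rank = k)
    (hsub : ∀ i, G i ∈ rowSpan G0) :
    (∀ S : Finset (Fin n), S.card = k → colRank G0 S = k → colRank G S = k) ↔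
      (∀ S : Finset (Fin n), S.card ≤ k → colRank G0 S = colRank G S) := by
  constructor
  · intro H S hSk
    set r := colRank G0 S with hrdef
    have hrS : r ≤ S.card := colRank_le_card G0 S
    have hrk : r ≤ k := hrS.trans hSk
    have hle : colRank G S ≤ r := colRank_le_of_rows_mem G0 G hsub S
    -- Step 1: an independent subset `T ⊆ S` of size `r`
    obtain ⟨b, hbsub, hbspan, hbli⟩ := exists_linearIndependent F (G0ᵀ '' ↑S)
    obtain ⟨T, hTS, hTbij⟩ := exists_finset_bijOn hbsub
    have hliT : LinearIndependent F (fun j : T => G0ᵀ (j : Fin n)) := li_of_bijOn hTbij hbli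
    have hcrT : colRank G0 T = r := by
      rw [colRank_eq_finrank_span, hTbij.image_eq, hbspan, ← colRank_eq_finrank_span]
    have hTcard : T.card = r := by
      rw [← (li_iff_colRank_eq_card G0 T).mp hliT, hcrT]
    -- Step 2: extend to `T''` of size `k` with independent `G0` columns
    have hsetli : LinearIndependent F ((↑) : (G0ᵀ '' ↑T) → (Fin t → F)) := by
      have := (linearIndepOn_id_range_iff hliT.injective).mpr hliT
      rwa [range_col_eq_image] at this
    obtain ⟨b2, hb2sub, hsb2, hspan2, hb2li⟩ :=
      exists_linearIndepOn_id_extension hsetli (Set.image_subset_range _ _)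
    have hb2fin : b2.Finite := (Set.finite_range G0ᵀ).subset hb2sub
    have hspan_eq : Submodule.span F b2 = Submodule.span F (Set.range G0ᵀ) :=
      le_antisymm (Submodule.span_mono hb2sub) (Submodule.span_le.mpr hspan2)
    haveI := hb2fin.fintype
    have hb2card : b2.ncard = t := by
      have h1 := finrank_span_set_eq_card hb2li
      rw [hspan_eq, show Set.range G0ᵀ = Set.range G0.col from rfl,
        ← Matrix.rank_eq_finrank_span_cols, hG0] at h1
      rw [Set.ncard_eq_toFinset_card' b2, ← h1]
    have hdiff : b2 \ (G0ᵀ '' ↑T) ⊆ G0ᵀ '' ↑(Tᶜ) := by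
      rintro v ⟨hv1, hv2⟩
      obtain ⟨j, rfl⟩ := hb2sub hv1
      refine ⟨j, ?_, rfl⟩
      simp only [Finset.coe_compl, Set.mem_compl_iff, Finset.mem_coe]
      intro hjT
      exact hv2 ⟨j, hjT, rfl⟩
    obtain ⟨U, hUc, hUbij⟩ := exists_finset_bijOn hdiff
    have hdisjTU : Disjoint (↑T : Set (Fin n)) ↑U :=
      Finset.disjoint_coe.mpr ((disjoint_compl_right).mono_right hUc)
    have hinj : Set.InjOn G0ᵀ (↑T ∪ ↑U) := by
      refine (Set.injOn_union hdisjTU).mpr ?_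
      refine ⟨hTbij.injOn, hUbij.injOn, ?_⟩
      intro x hx y hy hxy
      have h1 : G0ᵀ y ∈ b2 \ (G0ᵀ '' ↑T) := hUbij.mapsTo hy
      exact h1.2 ⟨x, hx, hxy⟩
    have hbijTU : Set.BijOn G0ᵀ ↑(T ∪ U) b2 := by
      have := (hTbij.injOn.bijOn_image).union hUbij hinj
      rwa [Set.union_diff_cancel hsb2, ← Finset.coe_union] at this
    have hliTU : LinearIndependent F (fun j : (T ∪ U : Finset (Fin n)) => G0ᵀ (j : Fin n)) :=
      li_of_bijOn hbijTU hb2li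
    have hcardTU : (T ∪ U).card = t := by rw [card_of_bijOn hbijTU, hb2card]
    obtain ⟨T'', hTT'', hT''TU, hT''card⟩ :=
      Finset.exists_subsuperset_card_eq (n := k) (Finset.subset_union_left (s₂ := U))
        (le_of_eq_of_le hTcard hrk) (le_of_le_of_eq hkt hcardTU.symm)
    have hliT'' : LinearIndependent F (fun j : T'' => G0ᵀ (j : Fin n)) :=
      li_subfamily hT''TU hliTU
    have hcrT'' : colRank G0 T'' = k := by
      rw [(li_iff_colRank_eq_card G0 T'').mp hliT'', hT''card]
    have hGk := H T'' hT''card hcrT''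
    have hliGT'' : LinearIndependent F (fun j : T'' => Gᵀ (j : Fin n)) :=
      (li_iff_colRank_eq_card G T'').mpr (by rw [hGk, hT''card])
    have hliGT : LinearIndependent F (fun j : T => Gᵀ (j : Fin n)) :=
      li_subfamily hTT'' hliGT''
    have hGT : colRank G T = r := by
      rw [(li_iff_colRank_eq_card G T).mp hliGT, hTcard]
    have hge : r ≤ colRank G S := hGT ▸ colRank_mono G hTS
    omega
  · intro H S hcard hrank
    rw [← H S hcard.le]
    exact hrank
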